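/- Assume additionally that a_i = 0 whenever λ_i = 0, and that Δ_Σ · Δ_R < M + s_min. Then the function γ ↦ h₁(h₂(γ)) + 1 admits a unique fixed point on [1, ∞): there exists exactly one γ* ≥ 1 with h₁(h₂(γ*)) + 1 = γ*. -/

import Mathlib

open Finset

/-- `h₁(γ̄) = (Σᵢ λᵢ aᵢ²/(1+λᵢγ̄)²) · (Σᵢ aᵢ²/(1+λᵢγ̄)²)⁻¹`. -/
noncomputable def h1 {n : ℕ} (lam a : Fin n → ℝ) (γ : ℝ) : ℝ :=
  (∑ i, lam i * a i ^ 2 / (1 + lam i * γ) ^ 2) * (∑ i, a i ^ 2 / (1 + lam i * γ) ^ 2)⁻¹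

/-- `h₂(γ) = (1 + M·(Σᵢ sᵢ²/(M+sᵢγ)²)·(Σᵢ sᵢ³/(M+sᵢγ)²)⁻¹)⁻¹`. -/
noncomputable def h2 {d : ℕ} (s : Fin d → ℝ) (M γ : ℝ) : ℝ :=
  (1 + M * (∑ i, s i ^ 2 / (M + s i * γ) ^ 2) * (∑ i, s i ^ 3 / (M + s i * γ) ^ 2)⁻¹)⁻¹

lemma key_ineq (a b x y V C : ℝ) (ha : 0 ≤ a) (hb : 0 ≤ b)
    (hx : 0 ≤ x) (hy : 0 ≤ y) (hVC : |V * (a - b)| ≤ C) :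
    |V * (1/((1+a*x)^2*(1+b*y)^2) - 1/((1+a*y)^2*(1+b*x)^2))|
      ≤ C * |x - y| * (1/((1+a*x)^2*(1+b*y)^2) + 1/((1+a*y)^2*(1+b*x)^2)) := by
  have hp : (1:ℝ) ≤ 1 + a*x := by have := mul_nonneg ha hx; linarith
  have hq : (1:ℝ) ≤ 1 + b*x := by have := mul_nonneg hb hx; linarith
  have hp' : (1:ℝ) ≤ 1 + a*y := by have := mul_nonneg ha hy; linarith
  have hq' : (1:ℝ) ≤ 1 + b*y := by have := mul_nonneg hb hy; linarith
  have hppos : (0:ℝ) < 1 + a*x := by linarith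
  have hqpos : (0:ℝ) < 1 + b*x := by linarith
  have hp'pos : (0:ℝ) < 1 + a*y := by linarith
  have hq'pos : (0:ℝ) < 1 + b*y := by linarith
  have hC0 : 0 ≤ C := le_trans (abs_nonneg _) hVC
  have hDpos : (0:ℝ) < (1+a*x)^2*(1+b*y)^2*((1+a*y)^2*(1+b*x)^2) := by positivity
  have hid : 1/((1+a*x)^2*(1+b*y)^2) - 1/((1+a*y)^2*(1+b*x)^2)
      = ((a-b)*(y-x))*(((1+a*y)*(1+b*x) + (1+a*x)*(1+b*y))
        / ((1+a*x)^2*(1+b*y)^2*((1+a*y)^2*(1+b*x)^2))) := by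
    field_simp
    ring
  have hPD : 0 ≤ ((1+a*y)*(1+b*x) + (1+a*x)*(1+b*y))
        / ((1+a*x)^2*(1+b*y)^2*((1+a*y)^2*(1+b*x)^2)) := by positivity
  have e : |V * (1/((1+a*x)^2*(1+b*y)^2) - 1/((1+a*y)^2*(1+b*x)^2))|
      = |V*(a-b)| * |x - y| * (((1+a*y)*(1+b*x) + (1+a*x)*(1+b*y))
        / ((1+a*x)^2*(1+b*y)^2*((1+a*y)^2*(1+b*x)^2))) := by
    rw [hid]
    rw [show V * ((a-b)*(y-x)*(((1+a*y)*(1+b*x) + (1+a*x)*(1+b*y))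
        / ((1+a*x)^2*(1+b*y)^2*((1+a*y)^2*(1+b*x)^2))))
        = (V*(a-b)) * ((y-x) * (((1+a*y)*(1+b*x) + (1+a*x)*(1+b*y))
        / ((1+a*x)^2*(1+b*y)^2*((1+a*y)^2*(1+b*x)^2)))) by ring]
    rw [abs_mul (V*(a-b)), abs_mul (y-x), abs_of_nonneg hPD, abs_sub_comm y x]
    ring
  rw [e]
  have hbound : ((1+a*y)*(1+b*x) + (1+a*x)*(1+b*y))
        / ((1+a*x)^2*(1+b*y)^2*((1+a*y)^2*(1+b*x)^2))
      ≤ 1/((1+a*x)^2*(1+b*y)^2) + 1/((1+a*y)^2*(1+b*x)^2) := by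
    rw [div_le_iff₀ hDpos]
    have h1 : 1 ≤ (1+a*y)*(1+b*x) := one_le_mul_of_one_le_of_one_le hp' hq
    have h2 : 1 ≤ (1+a*x)*(1+b*y) := one_le_mul_of_one_le_of_one_le hp hq'
    have h3 : (1+a*y)*(1+b*x) ≤ ((1+a*y)*(1+b*x))^2 := le_self_pow₀ h1 two_ne_zero
    have h4 : (1+a*x)*(1+b*y) ≤ ((1+a*x)*(1+b*y))^2 := le_self_pow₀ h2 two_ne_zero
    have e2 : (1/((1+a*x)^2*(1+b*y)^2) + 1/((1+a*y)^2*(1+b*x)^2))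
        * ((1+a*x)^2*(1+b*y)^2*((1+a*y)^2*(1+b*x)^2))
        = ((1+a*y)*(1+b*x))^2 + ((1+a*x)*(1+b*y))^2 := by
      field_simp
    rw [e2]; linarith
  calc |V*(a-b)| * |x - y| * (((1+a*y)*(1+b*x) + (1+a*x)*(1+b*y))
        / ((1+a*x)^2*(1+b*y)^2*((1+a*y)^2*(1+b*x)^2)))
      ≤ C * |x-y| * (1/((1+a*x)^2*(1+b*y)^2) + 1/((1+a*y)^2*(1+b*x)^2)) := by
        apply mul_le_mul (mul_le_mul_of_nonneg_right hVC (abs_nonneg _)) hbound hPD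
        positivity

lemma gen_lip {n : ℕ} (w t v : Fin n → ℝ) (hw : ∀ i, 0 ≤ w i)
    (ht : ∀ i, 0 ≤ t i) (hex : ∃ i, w i ≠ 0) (C : ℝ)
    (hC : ∀ i j, w i ≠ 0 → w j ≠ 0 → |(v i - v j) * (t i - t j)| ≤ C)
    (x y : ℝ) (hx : 0 ≤ x) (hy : 0 ≤ y) :
    |(∑ i, w i * v i / (1 + t i * x) ^ 2) * (∑ i, w i / (1 + t i * x) ^ 2)⁻¹ -
     (∑ i, w i * v i / (1 + t i * y) ^ 2) * (∑ i, w i / (1 + t i * y) ^ 2)⁻¹|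
      ≤ C * |x - y| := by
  obtain ⟨i0, hi0⟩ := hex
  have hC0 : 0 ≤ C := le_trans (abs_nonneg _) (hC i0 i0 hi0 hi0)
  have hfx : ∀ (i : Fin n) (γ : ℝ), 0 ≤ γ → (0:ℝ) < (1 + t i * γ) ^ 2 := by
    intro i γ hγ
    have := mul_nonneg (ht i) hγ
    positivity
  set Nx := ∑ i, w i * v i / (1 + t i * x) ^ 2 with hNx
  set Ny := ∑ i, w i * v i / (1 + t i * y) ^ 2 with hNy
  set Dx := ∑ i, w i / (1 + t i * x) ^ 2 with hDx
  set Dy := ∑ i, w i / (1 + t i * y) ^ 2 with hDy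
  have hDxpos : 0 < Dx := by
    apply Finset.sum_pos' (fun i _ => div_nonneg (hw i) (le_of_lt (hfx i x hx)))
    exact ⟨i0, Finset.mem_univ i0, div_pos (lt_of_le_of_ne (hw i0) (Ne.symm hi0)) (hfx i0 x hx)⟩
  have hDypos : 0 < Dy := by
    apply Finset.sum_pos' (fun i _ => div_nonneg (hw i) (le_of_lt (hfx i y hy)))
    exact ⟨i0, Finset.mem_univ i0, div_pos (lt_of_le_of_ne (hw i0) (Ne.symm hi0)) (hfx i0 y hy)⟩
  -- main bound on the cross term
  have key : |Nx * Dy - Ny * Dx| ≤ C * |x - y| * (Dx * Dy) := by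
    -- double sum expressions
    have e1 : Nx * Dy = ∑ i, ∑ j, (w i * v i / (1 + t i * x) ^ 2) * (w j / (1 + t j * y) ^ 2) := by
      rw [hNx, hDy, Finset.sum_mul_sum]
    have e2 : Ny * Dx = ∑ i, ∑ j, (w i * v i / (1 + t i * y) ^ 2) * (w j / (1 + t j * x) ^ 2) := by
      rw [hNy, hDx, Finset.sum_mul_sum]
    have e3 : Nx * Dy - Ny * Dx = ∑ i, ∑ j, (w i * w j * v i) *
        (1/((1 + t i * x)^2 * (1 + t j * y)^2) - 1/((1 + t i * y)^2 * (1 + t j * x)^2)) := by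
      rw [e1, e2, ← Finset.sum_sub_distrib]
      apply Finset.sum_congr rfl; intro i _
      rw [← Finset.sum_sub_distrib]
      apply Finset.sum_congr rfl; intro j _
      field_simp
    -- antisymmetrization
    have e4 : ∑ i, ∑ j, (w i * w j * v j) *
        (1/((1 + t i * x)^2 * (1 + t j * y)^2) - 1/((1 + t i * y)^2 * (1 + t j * x)^2))
        = - (Nx * Dy - Ny * Dx) := by
      rw [Finset.sum_comm, e3, ← Finset.sum_neg_distrib]
      apply Finset.sum_congr rfl; intro i _
      rw [← Finset.sum_neg_distrib]
      apply Finset.sum_congr rfl; intro j _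
      ring
    have e5 : 2 * (Nx * Dy - Ny * Dx) = ∑ i, ∑ j, (w i * w j * (v i - v j)) *
        (1/((1 + t i * x)^2 * (1 + t j * y)^2) - 1/((1 + t i * y)^2 * (1 + t j * x)^2)) := by
      have : ∑ i, ∑ j, (w i * w j * (v i - v j)) *
          (1/((1 + t i * x)^2 * (1 + t j * y)^2) - 1/((1 + t i * y)^2 * (1 + t j * x)^2))
          = (∑ i, ∑ j, (w i * w j * v i) *
          (1/((1 + t i * x)^2 * (1 + t j * y)^2) - 1/((1 + t i * y)^2 * (1 + t j * x)^2)))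
          - ∑ i, ∑ j, (w i * w j * v j) *
          (1/((1 + t i * x)^2 * (1 + t j * y)^2) - 1/((1 + t i * y)^2 * (1 + t j * x)^2)) := by
        rw [← Finset.sum_sub_distrib]
        apply Finset.sum_congr rfl; intro i _
        rw [← Finset.sum_sub_distrib]
        apply Finset.sum_congr rfl; intro j _
        ring
      rw [this, e4, ← e3]; ring
    -- termwise bound
    have e6 : ∀ i j : Fin n, |(w i * w j * (v i - v j)) *
        (1/((1 + t i * x)^2 * (1 + t j * y)^2) - 1/((1 + t i * y)^2 * (1 + t j * x)^2))|
        ≤ C * |x - y| * ((w i / (1 + t i * x)^2) * (w j / (1 + t j * y)^2)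
          + (w i / (1 + t i * y)^2) * (w j / (1 + t j * x)^2)) := by
      intro i j
      by_cases hwi : w i = 0
      · simp [hwi]
      by_cases hwj : w j = 0
      · simp [hwj]
      have h := key_ineq (t i) (t j) x y (v i - v j) C (ht i) (ht j) hx hy (hC i j hwi hwj)
      calc |(w i * w j * (v i - v j)) *
          (1/((1 + t i * x)^2 * (1 + t j * y)^2) - 1/((1 + t i * y)^2 * (1 + t j * x)^2))|
          = (w i * w j) * |(v i - v j) *
          (1/((1 + t i * x)^2 * (1 + t j * y)^2) - 1/((1 + t i * y)^2 * (1 + t j * x)^2))| := by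
            rw [show (w i * w j * (v i - v j)) *
              (1/((1 + t i * x)^2 * (1 + t j * y)^2) - 1/((1 + t i * y)^2 * (1 + t j * x)^2))
              = (w i * w j) * ((v i - v j) *
              (1/((1 + t i * x)^2 * (1 + t j * y)^2) - 1/((1 + t i * y)^2 * (1 + t j * x)^2))) by ring,
              abs_mul, abs_of_nonneg (mul_nonneg (hw i) (hw j))]
        _ ≤ (w i * w j) * (C * |x - y| * (1/((1 + t i * x)^2 * (1 + t j * y)^2)
              + 1/((1 + t i * y)^2 * (1 + t j * x)^2))) :=
            mul_le_mul_of_nonneg_left h (mul_nonneg (hw i) (hw j))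
        _ = C * |x - y| * ((w i / (1 + t i * x)^2) * (w j / (1 + t j * y)^2)
              + (w i / (1 + t i * y)^2) * (w j / (1 + t j * x)^2)) := by
            field_simp
    -- sum up
    have e7 : |∑ i, ∑ j, (w i * w j * (v i - v j)) *
        (1/((1 + t i * x)^2 * (1 + t j * y)^2) - 1/((1 + t i * y)^2 * (1 + t j * x)^2))|
        ≤ C * |x - y| * (Dx * Dy + Dy * Dx) := by
      have step1 := Finset.abs_sum_le_sum_abs (fun i => ∑ j, (w i * w j * (v i - v j)) *
        (1/((1 + t i * x)^2 * (1 + t j * y)^2) - 1/((1 + t i * y)^2 * (1 + t j * x)^2))) Finset.univ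
      refine le_trans step1 ?_
      have step2 : ∀ i : Fin n, |∑ j, (w i * w j * (v i - v j)) *
          (1/((1 + t i * x)^2 * (1 + t j * y)^2) - 1/((1 + t i * y)^2 * (1 + t j * x)^2))|
          ≤ ∑ j, C * |x - y| * ((w i / (1 + t i * x)^2) * (w j / (1 + t j * y)^2)
            + (w i / (1 + t i * y)^2) * (w j / (1 + t j * x)^2)) :=
        fun i => le_trans (Finset.abs_sum_le_sum_abs _ _)
          (Finset.sum_le_sum (fun j _ => e6 i j))
      refine le_trans (Finset.sum_le_sum (fun i _ => step2 i)) ?_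
      apply le_of_eq
      have e0 : Dx * Dy = ∑ i, ∑ j, (w i / (1 + t i * x)^2) * (w j / (1 + t j * y)^2) := by
        rw [hDx, hDy, Finset.sum_mul_sum]
      have e0' : Dy * Dx = ∑ i, ∑ j, (w i / (1 + t i * y)^2) * (w j / (1 + t j * x)^2) := by
        rw [hDy, hDx, Finset.sum_mul_sum]
      rw [e0, e0', ← Finset.sum_add_distrib, Finset.mul_sum]
      apply Finset.sum_congr rfl; intro i _
      rw [← Finset.sum_add_distrib, Finset.mul_sum]
    have e8 : 2 * |Nx * Dy - Ny * Dx| ≤ C * |x - y| * (Dx * Dy + Dy * Dx) := by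
      calc 2 * |Nx * Dy - Ny * Dx| = |2 * (Nx * Dy - Ny * Dx)| := by
            rw [abs_mul, abs_two]
        _ ≤ _ := by rw [e5]; exact e7
    have e9 : C * |x - y| * (Dx * Dy + Dy * Dx) = 2 * (C * |x - y| * (Dx * Dy)) := by ring
    linarith [e8, e9]
  -- conclude
  have hfin : Nx * Dx⁻¹ - Ny * Dy⁻¹ = (Nx * Dy - Ny * Dx) / (Dx * Dy) := by
    field_simp
  rw [hfin, abs_div, abs_of_pos (mul_pos hDxpos hDypos), div_le_iff₀ (mul_pos hDxpos hDypos)]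
  exact key

lemma h1_eq {n : ℕ} (lam a : Fin n → ℝ) (γ : ℝ) :
    h1 lam a γ = (∑ i, (fun i => a i ^ 2) i * lam i / (1 + lam i * γ) ^ 2) *
      (∑ i, (fun i => a i ^ 2) i / (1 + lam i * γ) ^ 2)⁻¹ := by
  unfold h1
  congr 1
  apply Finset.sum_congr rfl
  intro i _
  ring

lemma h2_eq {d : ℕ} (hd : 0 < d) (s : Fin d → ℝ) (hs : ∀ i, 0 < s i) (M : ℝ)
    (hM : 0 < M) (γ : ℝ) (hγ : 0 ≤ γ) :
    h2 s M γ = (∑ i, (fun i => s i ^ 2 * (M + s i)) i * (fun i => s i / (M + s i)) i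
        / (1 + (fun i => s i / M) i * γ) ^ 2) *
      (∑ i, (fun i => s i ^ 2 * (M + s i)) i / (1 + (fun i => s i / M) i * γ) ^ 2)⁻¹ := by
  have hden : ∀ i : Fin d, (0:ℝ) < M + s i * γ := fun i =>
    lt_of_lt_of_le hM (le_add_of_nonneg_right (mul_nonneg (hs i).le hγ))
  have hMs : ∀ i : Fin d, (0:ℝ) < M + s i := fun i => by have := hs i; linarith
  have hB : (0:ℝ) < ∑ i, s i ^ 3 / (M + s i * γ) ^ 2 := by
    apply Finset.sum_pos
    · intro i _
      have := hs i
      have := hden i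
      positivity
    · have : Nonempty (Fin d) := Fin.pos_iff_nonempty.mp hd
      exact Finset.univ_nonempty
  have hA : (0:ℝ) ≤ ∑ i, s i ^ 2 / (M + s i * γ) ^ 2 := by
    apply Finset.sum_nonneg
    intro i _
    positivity
  have t1 : (∑ i, (fun i => s i ^ 2 * (M + s i)) i * (fun i => s i / (M + s i)) i
        / (1 + (fun i => s i / M) i * γ) ^ 2)
      = M ^ 2 * ∑ i, s i ^ 3 / (M + s i * γ) ^ 2 := by
    rw [Finset.mul_sum]
    apply Finset.sum_congr rfl
    intro i _
    have h1 := (hMs i).ne'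
    have h2 := (hden i).ne'
    field_simp
  have t2 : (∑ i, (fun i => s i ^ 2 * (M + s i)) i / (1 + (fun i => s i / M) i * γ) ^ 2)
      = M ^ 2 * ((∑ i, s i ^ 3 / (M + s i * γ) ^ 2)
          + M * ∑ i, s i ^ 2 / (M + s i * γ) ^ 2) := by
    have t2' : (∑ i, (fun i => s i ^ 2 * (M + s i)) i / (1 + (fun i => s i / M) i * γ) ^ 2)
        = ∑ i, (M ^ 2 * (s i ^ 3 / (M + s i * γ) ^ 2)
          + M ^ 2 * M * (s i ^ 2 / (M + s i * γ) ^ 2)) := by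
      apply Finset.sum_congr rfl
      intro i _
      have h1 := (hMs i).ne'
      have h2 := (hden i).ne'
      field_simp
      ring
    rw [t2', Finset.sum_add_distrib, ← Finset.mul_sum, ← Finset.mul_sum]
    ring
  rw [t1, t2]
  unfold h2
  have hE : (0:ℝ) < (∑ i, s i ^ 3 / (M + s i * γ) ^ 2)
      + M * ∑ i, s i ^ 2 / (M + s i * γ) ^ 2 := by
    have := mul_nonneg hM.le hA
    linarith
  have hBne := hB.ne'
  have hEne := hE.ne'
  have hMne := hM.ne'
  generalize ∑ i, s i ^ 2 / (M + s i * γ) ^ 2 = A at *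
  generalize ∑ i, s i ^ 3 / (M + s i * γ) ^ 2 = B at *
  field_simp

lemma h1_nonneg {n : ℕ} (lam a : Fin n → ℝ) (hlam : ∀ i, 0 ≤ lam i) (γ : ℝ) :
    0 ≤ h1 lam a γ :=
  mul_nonneg
    (Finset.sum_nonneg fun i _ => div_nonneg (mul_nonneg (hlam i) (sq_nonneg _)) (sq_nonneg _))
    (inv_nonneg.mpr (Finset.sum_nonneg fun i _ => div_nonneg (sq_nonneg _) (sq_nonneg _)))

lemma h1_le {n : ℕ} (lam a : Fin n → ℝ) (hlam : ∀ i, 0 ≤ lam i)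
    (ha : ∃ i, a i ≠ 0) (lmax : ℝ) (hub : ∀ i, a i ≠ 0 → lam i ≤ lmax)
    (γ : ℝ) (hγ : 0 ≤ γ) : h1 lam a γ ≤ lmax := by
  obtain ⟨i0, hi0⟩ := ha
  have hf : ∀ i : Fin n, (0:ℝ) < (1 + lam i * γ) ^ 2 := by
    intro i
    have := mul_nonneg (hlam i) hγ
    positivity
  have hD : (0:ℝ) < ∑ i, a i ^ 2 / (1 + lam i * γ) ^ 2 := by
    apply Finset.sum_pos' (fun i _ => div_nonneg (sq_nonneg _) (hf i).le)
    exact ⟨i0, Finset.mem_univ i0, div_pos (by positivity) (hf i0)⟩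
  have hN : (∑ i, lam i * a i ^ 2 / (1 + lam i * γ) ^ 2)
      ≤ lmax * ∑ i, a i ^ 2 / (1 + lam i * γ) ^ 2 := by
    rw [Finset.mul_sum]
    apply Finset.sum_le_sum
    intro i _
    by_cases hai : a i = 0
    · simp [hai]
    · have h1 := hub i hai
      have hterm : lam i * a i ^ 2 / (1 + lam i * γ) ^ 2
          = (a i ^ 2 / (1 + lam i * γ) ^ 2) * lam i := by ring
      rw [hterm, mul_comm lmax]
      exact mul_le_mul_of_nonneg_left h1 (by positivity)
  unfold h1
  rw [← div_eq_mul_inv, div_le_iff₀ hD]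
  linarith [hN]

lemma h2_nonneg {d : ℕ} (hd : 0 < d) (s : Fin d → ℝ) (hs : ∀ i, 0 < s i) (M : ℝ)
    (hM : 0 < M) (γ : ℝ) (hγ : 0 ≤ γ) : 0 ≤ h2 s M γ := by
  rw [h2_eq hd s hs M hM γ hγ]
  apply mul_nonneg
  · apply Finset.sum_nonneg
    intro i _
    have h1 := hs i
    have h2 : (0:ℝ) < M + s i := by linarith
    positivity
  · apply inv_nonneg.mpr
    apply Finset.sum_nonneg
    intro i _
    have h1 := hs i
    have h2 : (0:ℝ) < M + s i := by linarith
    positivity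

/-- Unique fixed point. Assuming `aᵢ = 0` whenever `λᵢ = 0`
and `Δ_Σ · Δ_R < M + s_min`, the map `γ ↦ h₁(h₂(γ)) + 1` has exactly one fixed
point on `[1, ∞)`. -/
theorem stmt6 (d n : ℕ) (hd : 0 < d) (hn : 0 < n)
    (s : Fin d → ℝ) (hs : ∀ i, 0 < s i)
    (lam : Fin n → ℝ) (hlam : ∀ i, 0 ≤ lam i)
    (a : Fin n → ℝ) (ha : ∃ i, a i ≠ 0)
    (σ : ℝ) (hσ : 0 ≤ σ)
    (M : ℝ) (hM : M = σ ^ 2 + ∑ i, s i)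
    (ha0 : ∀ i, lam i = 0 → a i = 0)
    (smax smin : ℝ)
    (hsmax : IsGreatest (Set.range s) smax) (hsmin : IsLeast (Set.range s) smin)
    (lmax lmin : ℝ)
    (hlmax : IsGreatest {x | ∃ i, lam i = x ∧ x ≠ 0} lmax)
    (hlmin : IsLeast {x | ∃ i, lam i = x ∧ x ≠ 0} lmin)
    (hgap : (smax - smin) * (lmax - lmin) < M + smin) :
    ∃! γstar : ℝ, 1 ≤ γstar ∧ h1 lam a (h2 s M γstar) + 1 = γstar := by
  obtain ⟨i0, hai0⟩ := ha
  have hd' : Nonempty (Fin d) := Fin.pos_iff_nonempty.mp hd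
  have hMpos : 0 < M := by
    rw [hM]
    have : (0:ℝ) < ∑ i, s i :=
      Finset.sum_pos (fun i _ => hs i) Finset.univ_nonempty
    positivity
  -- smin/smax facts
  obtain ⟨⟨im, him⟩, hminlb⟩ := hsmin
  obtain ⟨⟨iM, hiM⟩, hmaxub⟩ := hsmax
  have hsminpos : 0 < smin := him ▸ hs im
  have hsminle : ∀ i, smin ≤ s i := fun i => hminlb ⟨i, rfl⟩
  have hsmaxge : ∀ i, s i ≤ smax := fun i => hmaxub ⟨i, rfl⟩
  have hss : smin ≤ smax := le_trans (hsminle iM) (le_of_eq hiM)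
  -- lmin/lmax facts
  obtain ⟨⟨il, hil, hilne⟩, hlub⟩ := hlmax
  obtain ⟨_, hllb⟩ := hlmin
  have hlmax0 : 0 ≤ lmax := hil ▸ hlam il
  have hll : lmin ≤ lmax := hllb ⟨il, hil, hilne⟩
  have hlamle : ∀ i, a i ≠ 0 → lam i ≤ lmax := fun i hai =>
    hlub ⟨i, rfl, fun h => hai (ha0 i h)⟩
  have hlamge : ∀ i, a i ≠ 0 → lmin ≤ lam i := fun i hai =>
    hllb ⟨i, rfl, fun h => hai (ha0 i h)⟩
  -- Lipschitz constants
  set C1 : ℝ := (lmax - lmin) ^ 2 with hC1def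
  set C2 : ℝ := (smax - smin) ^ 2 / (M + smin) ^ 2 with hC2def
  have hC1nn : 0 ≤ C1 := sq_nonneg _
  have hC2nn : 0 ≤ C2 := div_nonneg (sq_nonneg _) (sq_nonneg _)
  -- Lipschitz for h1
  have hL1 : ∀ x y : ℝ, 0 ≤ x → 0 ≤ y →
      |h1 lam a x - h1 lam a y| ≤ C1 * |x - y| := by
    intro x y hx hy
    rw [h1_eq lam a x, h1_eq lam a y]
    apply gen_lip (fun i => a i ^ 2) lam lam (fun i => sq_nonneg _) hlam
      ⟨i0, pow_ne_zero 2 hai0⟩ C1 ?_ x y hx hy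
    intro i j hwi hwj
    have hai : a i ≠ 0 := fun h => hwi (by simp [h])
    have haj : a j ≠ 0 := fun h => hwj (by simp [h])
    have h1 := hlamle i hai; have h2 := hlamge i hai
    have h3 := hlamle j haj; have h4 := hlamge j haj
    rw [abs_mul]
    have habs : |lam i - lam j| ≤ lmax - lmin := abs_le.mpr ⟨by linarith, by linarith⟩
    calc |lam i - lam j| * |lam i - lam j| ≤ (lmax - lmin) * (lmax - lmin) :=
          mul_le_mul habs habs (abs_nonneg _) (by linarith)
      _ = C1 := by rw [hC1def]; ring
  -- Lipschitz for h2
  have hMs : ∀ i : Fin d, (0:ℝ) < M + s i := fun i => by have := hs i; linarith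
  have hL2 : ∀ x y : ℝ, 0 ≤ x → 0 ≤ y →
      |h2 s M x - h2 s M y| ≤ C2 * |x - y| := by
    intro x y hx hy
    rw [h2_eq hd s hs M hMpos x hx, h2_eq hd s hs M hMpos y hy]
    apply gen_lip (fun i => s i ^ 2 * (M + s i)) (fun i => s i / M) (fun i => s i / (M + s i))
      (fun i => by have := hs i; have := hMs i; positivity)
      (fun i => by have := hs i; positivity)
      ⟨⟨0, hd⟩, by have := hs ⟨0, hd⟩; have := hMs ⟨0, hd⟩; positivity⟩ C2 ?_ x y hx hy
    intro i j _ _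
    have e : (s i / (M + s i) - s j / (M + s j)) * (s i / M - s j / M)
        = (s i - s j) ^ 2 * (M / ((M + s i) * (M + s j) * M)) := by
      field_simp [(hMs i).ne', (hMs j).ne', hMpos.ne']
      ring
    have epos : (0:ℝ) ≤ (s i - s j) ^ 2 * (M / ((M + s i) * (M + s j) * M)) := by
      have := hMs i; have := hMs j
      positivity
    rw [e, abs_of_nonneg epos]
    have e2 : (s i - s j) ^ 2 * (M / ((M + s i) * (M + s j) * M))
        = (s i - s j) ^ 2 / ((M + s i) * (M + s j)) := by
      field_simp [(hMs i).ne', (hMs j).ne', hMpos.ne']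
    rw [e2, hC2def]
    apply div_le_div₀ (sq_nonneg _) ?_ (by positivity) ?_
    · have h1 := hsminle i; have h2 := hsmaxge i
      have h3 := hsminle j; have h4 := hsmaxge j
      have habs : |s i - s j| ≤ smax - smin := abs_le.mpr ⟨by linarith, by linarith⟩
      calc (s i - s j) ^ 2 = |s i - s j| ^ 2 := (sq_abs _).symm
        _ ≤ (smax - smin) ^ 2 := by
            apply pow_le_pow_left₀ (abs_nonneg _) habs
    · have h1 := hsminle i; have h2 := hsminle j
      have hp : (0:ℝ) < M + smin := by linarith
      calc (M + smin) ^ 2 = (M + smin) * (M + smin) := sq (M + smin) ▸ by ring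
        _ ≤ (M + s i) * (M + s j) := by
            apply mul_le_mul (by linarith) (by linarith) hp.le (by linarith [hMs i])
  -- contraction constant
  set k : ℝ := C1 * C2 with hkdef
  have hk0 : 0 ≤ k := mul_nonneg hC1nn hC2nn
  have hk1 : k < 1 := by
    rw [hkdef, hC1def, hC2def]
    have hp : (0:ℝ) < (M + smin) ^ 2 := by positivity
    rw [show (lmax - lmin) ^ 2 * ((smax - smin) ^ 2 / (M + smin) ^ 2)
        = ((smax - smin) * (lmax - lmin)) ^ 2 / (M + smin) ^ 2 from by ring,
      div_lt_one hp]
    have h0 : 0 ≤ (smax - smin) * (lmax - lmin) :=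
      mul_nonneg (by linarith) (by linarith)
    nlinarith [hgap, h0]
  -- the fixed point map
  set F : ℝ → ℝ := fun γ => h1 lam a (h2 s M γ) + 1 with hFdef
  have hLF : ∀ x y : ℝ, 0 ≤ x → 0 ≤ y → |F x - F y| ≤ k * |x - y| := by
    intro x y hx hy
    have h2x := h2_nonneg hd s hs M hMpos x hx
    have h2y := h2_nonneg hd s hs M hMpos y hy
    have e : F x - F y = h1 lam a (h2 s M x) - h1 lam a (h2 s M y) := by
      simp only [hFdef]; ring
    rw [e]
    calc |h1 lam a (h2 s M x) - h1 lam a (h2 s M y)|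
        ≤ C1 * |h2 s M x - h2 s M y| := hL1 _ _ h2x h2y
      _ ≤ C1 * (C2 * |x - y|) := mul_le_mul_of_nonneg_left (hL2 x y hx hy) hC1nn
      _ = k * |x - y| := by rw [hkdef]; ring
  have hFge : ∀ γ : ℝ, 0 ≤ γ → 1 ≤ F γ := by
    intro γ hγ
    have := h1_nonneg lam a hlam (h2 s M γ)
    simp only [hFdef]
    linarith
  have hFle : ∀ γ : ℝ, 0 ≤ γ → F γ ≤ 1 + lmax := by
    intro γ hγ
    have := h1_le lam a hlam ⟨i0, hai0⟩ lmax hlamle (h2 s M γ)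
      (h2_nonneg hd s hs M hMpos γ hγ)
    simp only [hFdef]
    linarith
  set b : ℝ := 1 + lmax with hbdef
  have hb1 : (1:ℝ) ≤ b := by rw [hbdef]; linarith
  have hcont : ContinuousOn F (Set.Icc 1 b) := by
    have hlip : LipschitzOnWith (Real.toNNReal k) F (Set.Icc 1 b) := by
      apply LipschitzOnWith.of_dist_le_mul
      intro x hx y hy
      rw [Real.dist_eq, Real.dist_eq]
      calc |F x - F y| ≤ k * |x - y| :=
            hLF x y (le_trans zero_le_one hx.1) (le_trans zero_le_one hy.1)
        _ ≤ (Real.toNNReal k : ℝ) * |x - y| :=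
            mul_le_mul_of_nonneg_right (Real.le_coe_toNNReal k) (abs_nonneg _)
    exact hlip.continuousOn
  have hgcont : ContinuousOn (fun γ => F γ - γ) (Set.Icc 1 b) :=
    hcont.sub continuousOn_id
  have hmem : (0:ℝ) ∈ Set.Icc ((fun γ => F γ - γ) b) ((fun γ => F γ - γ) 1) := by
    constructor
    · simp only
      have := hFle b (by linarith)
      linarith
    · simp only
      have := hFge 1 zero_le_one
      linarith
  obtain ⟨c, hcmem, hgc⟩ := intermediate_value_Icc' hb1 hgcont hmem
  simp only at hgc
  have hFc : F c = c := by linarith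
  refine ⟨c, ⟨hcmem.1, ?_⟩, ?_⟩
  · have : F c = h1 lam a (h2 s M c) + 1 := rfl
    linarith
  · rintro y ⟨hy1, hy2⟩
    have hFy : F y = y := by
      have : F y = h1 lam a (h2 s M y) + 1 := rfl
      linarith
    have hl := hLF y c (by linarith) (le_trans zero_le_one hcmem.1)
    rw [hFy, hFc] at hl
    have habs := abs_nonneg (y - c)
    rcases eq_or_lt_of_le habs with heq | hpos
    · have : y - c = 0 := abs_eq_zero.mp heq.symm
      linarith
    · exfalso
      have h2 : k * |y - c| < 1 * |y - c| := mul_lt_mul_of_pos_right hk1 hpos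
      linarith
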